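/- Let q ≥ 5 be a prime power and let C = PRS(q+1,q−3). Assume that the covering radius of C equals 3. Then the number of distinct cosets u + C with u ∈ F_q^{q+1} and d(u,C) = 3 equals (q−1)(q³ + 2q² + q)/2. -/

import Mathlib

open Polynomial

/-- The error distance from a word `u` to a code `C`. -/
noncomputable def errDist {ι F : Type*} [Fintype ι] [DecidableEq F]
    (u : ι → F) (C : Set (ι → F)) : ℕ :=
  sInf {d | ∃ c ∈ C, hammingDist u c = d}

/-- The covering radius of a code `C`. -/
noncomputable def covRad {ι F : Type*} [Fintype ι] [DecidableEq F]
    (C : Set (ι → F)) : ℕ :=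
  sSup {d | ∃ u : ι → F, errDist u C = d}

/-- The projective Reed–Solomon code of length `q + 1` and dimension `k`. -/
def PRS (F : Type*) [Field F] (k : ℕ) : Set (Option F → F) :=
  {w | ∃ f : F[X], f.degree < (k : ℕ) ∧ (∀ x : F, w (some x) = f.eval x) ∧
    w none = f.coeff (k - 1)}

section Aux

open Finset

set_option linter.unusedSectionVars false

/-- Cardinality of a Hamming ball of radius 2 around the origin. -/
lemma ball2_card (ι α : Type*) [Fintype ι] [DecidableEq ι] [Fintype α] [DecidableEq α]
    [Zero α] :
    Nat.card {w : ι → α // hammingNorm w ≤ 2} =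
      1 + Fintype.card ι * (Fintype.card α - 1) +
        (Fintype.card ι).choose 2 * (Fintype.card α - 1) ^ 2 := by
  classical
  set S : Finset (Finset ι) := univ.filter fun s => s.card ≤ 2 with hS
  have hnorm : ∀ w : ι → α, hammingNorm w = (univ.filter fun i => w i ≠ 0).card := fun w => rfl
  let Φ : (Σ s : S, ({i // i ∈ s.1} → {a : α // a ≠ 0})) → {w : ι → α // hammingNorm w ≤ 2} :=
    fun p => ⟨fun i => if h : i ∈ p.1.1 then (p.2 ⟨i, h⟩).1 else 0, by
      have hfe : (univ.filter fun i => (if h : i ∈ p.1.1 then (p.2 ⟨i, h⟩).1 else 0) ≠ 0)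
          = p.1.1 := by
        ext i
        by_cases h : i ∈ p.1.1
        · simp [h, (p.2 ⟨i, h⟩).2]
        · simp [h]
      rw [hnorm]
      refine le_trans (Finset.card_le_card (hfe.le)) ?_
      exact (Finset.mem_filter.mp p.1.2).2⟩
  have hbij : Function.Bijective Φ := by
    constructor
    · rintro ⟨⟨s, hs⟩, g⟩ ⟨⟨t, ht⟩, h⟩ heq
      have hval := congrArg Subtype.val heq
      simp only [Φ] at hval
      have hst : s = t := by
        ext i
        constructor
        · intro hi
          by_contra hit
          have := congrFun hval i
          simp [hi, hit] at this
          exact (g ⟨i, hi⟩).2 this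
        · intro hi
          by_contra his
          have := congrFun hval i
          simp [hi, his] at this
          exact (h ⟨i, hi⟩).2 this.symm
      subst hst
      have : g = h := by
        funext i
        have := congrFun hval i.1
        simp [i.2] at this
        exact Subtype.ext this
      rw [this]
    · rintro ⟨w, hw⟩
      have hsmem : (univ.filter fun i => w i ≠ 0) ∈ S := by
        exact Finset.mem_filter.mpr ⟨mem_univ _, hw⟩
      refine ⟨⟨⟨_, hsmem⟩, fun i => ⟨w i.1, (mem_filter.mp i.2).2⟩⟩, ?_⟩
      apply Subtype.ext
      funext i
      simp only [Φ]
      by_cases h : i ∈ (univ.filter fun i => w i ≠ 0)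
      · simp [h]
      · simp only [mem_filter, mem_univ, true_and, not_not] at h
        simp [h]
  rw [← Nat.card_congr (Equiv.ofBijective Φ hbij), Nat.card_eq_fintype_card, Fintype.card_sigma]
  have hcard : ∀ s : S, Fintype.card ({i // i ∈ s.1} → {a : α // a ≠ 0})
      = (Fintype.card α - 1) ^ s.1.card := by
    intro s
    rw [Fintype.card_fun, Fintype.card_subtype_compl, Fintype.card_subtype_eq]
    congr 1
    exact Fintype.card_coe _
  simp_rw [hcard]
  rw [Finset.sum_coe_sort S (fun s => (Fintype.card α - 1) ^ s.card)]
  have hsplit : S = powersetCard 0 (univ : Finset ι) ∪ powersetCard 1 univ ∪ powersetCard 2 univ := by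
    ext s
    simp only [S, mem_filter, mem_univ, true_and, mem_union, Finset.mem_powersetCard_univ]
    omega
  have hd1 : Disjoint (powersetCard 0 (univ : Finset ι) ∪ powersetCard 1 univ) (powersetCard 2 univ) := by
    rw [Finset.disjoint_left]
    intro s hs hs2
    simp only [mem_union, Finset.mem_powersetCard_univ] at hs hs2
    omega
  have hd0 : Disjoint (powersetCard 0 (univ : Finset ι)) (powersetCard 1 univ) := by
    rw [Finset.disjoint_left]
    intro s hs hs2
    simp only [mem_union, Finset.mem_powersetCard_univ] at hs hs2
    omega
  have hsum : ∀ j : ℕ, ∑ s ∈ powersetCard j (univ : Finset ι), (Fintype.card α - 1) ^ s.card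
      = (Fintype.card ι).choose j * (Fintype.card α - 1) ^ j := by
    intro j
    rw [Finset.sum_congr rfl (fun s hs => by rw [Finset.mem_powersetCard_univ.mp hs])]
    rw [Finset.sum_const, Finset.card_powersetCard, Finset.card_univ, smul_eq_mul]
  rw [hsplit, Finset.sum_union hd1, Finset.sum_union hd0, hsum, hsum, hsum]
  simp

variable {F : Type*} [Field F] [Fintype F] [DecidableEq F]

lemma aux_rootcard {f : F[X]} (hf : f ≠ 0) :
    (univ.filter fun x => f.eval x = 0).card ≤ f.natDegree := by
  apply Polynomial.card_le_degree_of_subset_roots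
  intro x hx
  simp only [Finset.mem_val, Finset.mem_filter] at hx
  rw [mem_roots hf]
  exact hx.2

lemma aux_eval_zero {f : F[X]} (hd : f.degree < (Fintype.card F : ℕ))
    (h0 : ∀ x : F, f.eval x = 0) : f = 0 := by
  by_contra hf
  have h1 := aux_rootcard hf
  have h2 : (univ.filter fun x => f.eval x = 0) = univ := by
    ext x; simp [h0]
  rw [h2, Finset.card_univ] at h1
  have h3 : f.natDegree < Fintype.card F := (natDegree_lt_iff_degree_lt hf).mpr hd
  omega

lemma prs_zero {k : ℕ} : (0 : Option F → F) ∈ PRS F k :=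
  ⟨0, by rw [degree_zero]; exact WithBot.bot_lt_coe k, by simp, by simp⟩

lemma prs_add {k : ℕ} {v w : Option F → F} (hv : v ∈ PRS F k) (hw : w ∈ PRS F k) :
    v + w ∈ PRS F k := by
  obtain ⟨f, hf, hfe, hfc⟩ := hv
  obtain ⟨g, hg, hge, hgc⟩ := hw
  exact ⟨f + g, lt_of_le_of_lt (degree_add_le f g) (max_lt hf hg),
    fun x => by simp [hfe, hge], by simp [hfc, hgc]⟩

lemma prs_neg {k : ℕ} {v : Option F → F} (hv : v ∈ PRS F k) : -v ∈ PRS F k := by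
  obtain ⟨f, hf, hfe, hfc⟩ := hv
  exact ⟨-f, by simpa using hf, fun x => by simp [hfe x], by simp [hfc]⟩

lemma prs_minwt (hq : 5 ≤ Fintype.card F) {w : Option F → F}
    (hw : w ∈ PRS F (Fintype.card F - 3)) (h4 : hammingNorm w ≤ 4) : w = 0 := by
  classical
  set q := Fintype.card F with hqdef
  obtain ⟨f, hdeg, hev, hcoef⟩ := hw
  by_cases hf : f = 0
  · funext i
    cases i
    · simp [hcoef, hf]
    · simp [hev, hf]
  · exfalso
    have hnd : f.natDegree < q - 3 := (natDegree_lt_iff_degree_lt hf).mpr hdeg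
    set Z : Finset F := univ.filter fun x => f.eval x = 0 with hZ
    set Nz : Finset F := univ.filter fun x => f.eval x ≠ 0 with hNz
    have hZN : Z.card + Nz.card = q := by
      rw [hZ, hNz]
      rw [Finset.card_filter_add_card_filter_not]
      exact Finset.card_univ
    have hZb : Z.card ≤ f.natDegree := aux_rootcard hf
    have hmap : Nz.map Function.Embedding.some ⊆ univ.filter fun i => w i ≠ 0 := by
      intro i hi
      rw [Finset.mem_map] at hi
      obtain ⟨x, hx, rfl⟩ := hi
      rw [Finset.mem_filter] at hx ⊢
      refine ⟨Finset.mem_univ _, ?_⟩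
      rw [Function.Embedding.some_apply, hev x]
      exact hx.2
    have hnorm : hammingNorm w = (univ.filter fun i => w i ≠ 0).card := rfl
    have hNb : Nz.card ≤ 4 := by
      have := Finset.card_le_card hmap
      rw [Finset.card_map] at this
      omega
    have hnd4 : f.natDegree = q - 4 := by omega
    have hlc : w none ≠ 0 := by
      rw [hcoef]
      have : q - 3 - 1 = f.natDegree := by omega
      rw [this]
      exact mt leadingCoeff_eq_zero.mp hf
    have hnone : none ∈ univ.filter fun i : Option F => w i ≠ 0 :=
      Finset.mem_filter.mpr ⟨Finset.mem_univ _, hlc⟩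
    have hins : insert none (Nz.map Function.Embedding.some) ⊆
        univ.filter fun i => w i ≠ 0 := by
      intro i hi
      rcases Finset.mem_insert.mp hi with rfl | hi
      · exact hnone
      · exact hmap hi
    have hni : none ∉ Nz.map Function.Embedding.some := by
      simp
    have hc5 : Nz.card + 1 ≤ hammingNorm w := by
      have := Finset.card_le_card hins
      rw [Finset.card_insert_of_notMem hni, Finset.card_map] at this
      omega
    omega

lemma prs_card {k : ℕ} (hk : k ≤ Fintype.card F) :
    Nat.card (PRS F k) = Fintype.card F ^ k := by
  classical
  let Ψ : Polynomial.degreeLT F k → PRS F k := fun f =>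
    ⟨fun i => Option.rec (f.1.coeff (k - 1)) (fun x => f.1.eval x) i,
      ⟨f.1, Polynomial.mem_degreeLT.mp f.2, fun x => rfl, rfl⟩⟩
  have hbij : Function.Bijective Ψ := by
    constructor
    · rintro ⟨f, hf⟩ ⟨g, hg⟩ heq
      have hval := congrArg Subtype.val heq
      apply Subtype.ext
      have hfg : f - g = 0 := by
        apply aux_eval_zero
        · apply lt_of_lt_of_le (lt_of_le_of_lt (degree_sub_le f g)
            (max_lt (Polynomial.mem_degreeLT.mp hf) (Polynomial.mem_degreeLT.mp hg)))
          exact_mod_cast Nat.cast_le.mpr hk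
        · intro x
          have := congrFun hval (some x)
          simp only [Ψ] at this
          simp [this]
      exact sub_eq_zero.mp hfg
    · rintro ⟨w, f, hdeg, hev, hcoef⟩
      refine ⟨⟨f, Polynomial.mem_degreeLT.mpr hdeg⟩, ?_⟩
      apply Subtype.ext
      funext i
      cases i
      · exact hcoef.symm
      · exact (hev _).symm
  rw [← Nat.card_congr (Equiv.ofBijective Ψ hbij)]
  rw [Nat.card_congr (Polynomial.degreeLTEquiv F k).toEquiv]
  rw [Nat.card_eq_fintype_card, Fintype.card_fun, Fintype.card_fin]

lemma arith_aux {q : ℕ} (hq : 5 ≤ q) :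
    q ^ 4 - (1 + (q + 1) * (q - 1) + (q + 1).choose 2 * (q - 1) ^ 2)
      = (q - 1) * (q ^ 3 + 2 * q ^ 2 + q) / 2 := by
  obtain ⟨r, rfl⟩ : ∃ r, q = r + 1 := ⟨q - 1, by omega⟩
  obtain ⟨m, hm⟩ := Nat.even_mul_succ_self (r + 1)
  have hsub : r + 1 - 1 = r := by omega
  rw [hsub]
  have hch : (r + 1 + 1).choose 2 = m := by
    rw [Nat.choose_two_right]
    have h1 : (r + 1 + 1) * (r + 1 + 1 - 1) = m + m := by
      rw [show r + 1 + 1 - 1 = r + 1 from rfl, mul_comm]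
      exact hm
    omega
  rw [hch]
  have heq2 : 2 * (1 + (r + 1 + 1) * r + m * r ^ 2 + m * (r * (r + 2))) = 2 * ((r + 1) ^ 4) := by
    calc 2 * (1 + (r + 1 + 1) * r + m * r ^ 2 + m * (r * (r + 2)))
        = 2 + 2 * ((r + 2) * r) + (m + m) * r ^ 2 + (m + m) * (r * (r + 2)) := by ring
      _ = 2 + 2 * ((r + 2) * r) + ((r + 1) * (r + 1 + 1)) * r ^ 2
            + ((r + 1) * (r + 1 + 1)) * (r * (r + 2)) := by rw [hm]
      _ = 2 * ((r + 1) ^ 4) := by ring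
  have heq : (r + 1) ^ 4 = 1 + (r + 1 + 1) * r + m * r ^ 2 + m * (r * (r + 2)) :=
    (Nat.eq_of_mul_eq_mul_left (by norm_num) heq2).symm
  have hX : r * ((r + 1) ^ 3 + 2 * (r + 1) ^ 2 + (r + 1)) = 2 * (m * (r * (r + 2))) := by
    calc r * ((r + 1) ^ 3 + 2 * (r + 1) ^ 2 + (r + 1))
        = ((r + 1) * (r + 1 + 1)) * (r * (r + 2)) := by ring
      _ = (m + m) * (r * (r + 2)) := by rw [hm]
      _ = 2 * (m * (r * (r + 2))) := by ring
  rw [hX, Nat.mul_div_cancel_left _ (by norm_num : 0 < 2), heq, Nat.add_sub_cancel_left]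

end Aux

/-- For `k = q - 3`, assuming `ρ(PRS(q+1, q-3)) = 3`, the number of cosets of
deep holes of `PRS(q+1, q-3)` is `(q-1)(q³ + 2q² + q)/2`. -/
theorem stmt8 {F : Type*} [Field F] [Fintype F] [DecidableEq F]
    (hq : 5 ≤ Fintype.card F)
    (hcov : covRad (PRS F (Fintype.card F - 3)) = 3) :
    Nat.card {S : Set (Option F → F) // ∃ u : Option F → F,
        errDist u (PRS F (Fintype.card F - 3)) = 3 ∧
        S = (u + ·) '' (PRS F (Fintype.card F - 3))}
      = (Fintype.card F - 1) *
          ((Fintype.card F) ^ 3 + 2 * (Fintype.card F) ^ 2 + Fintype.card F) / 2 := by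
  classical
  set q := Fintype.card F with hqdef
  set C := PRS F (q - 3) with hC
  have h0C : (0 : Option F → F) ∈ C := prs_zero
  have hle : ∀ (u c : Option F → F), c ∈ C → errDist u C ≤ hammingDist u c :=
    fun u c hc => Nat.sInf_le ⟨c, hc, rfl⟩
  have hex : ∀ u : Option F → F, ∃ c ∈ C, hammingDist u c = errDist u C :=
    fun u => Nat.sInf_mem (s := {d | ∃ c ∈ C, hammingDist u c = d})
      ⟨hammingDist u 0, 0, h0C, rfl⟩
  let Csub : AddSubgroup (Option F → F) :=
    { carrier := C
      zero_mem' := h0C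
      add_mem' := fun ha hb => prs_add ha hb
      neg_mem' := fun ha => prs_neg ha }
  have hinv : ∀ (a c : Option F → F), c ∈ C → errDist (a + c) C = errDist a C := by
    intro a c hc
    show sInf _ = sInf _
    congr 1
    ext d
    constructor
    · rintro ⟨c', hc', rfl⟩
      refine ⟨c' - c, by rw [sub_eq_add_neg]; exact prs_add hc' (prs_neg hc), ?_⟩
      rw [hammingDist_eq_hammingNorm, hammingDist_eq_hammingNorm]
      congr 1
      ring
    · rintro ⟨c', hc', rfl⟩
      refine ⟨c' + c, prs_add hc' hc, ?_⟩
      rw [hammingDist_eq_hammingNorm, hammingDist_eq_hammingNorm]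
      congr 1
      ring
  let ED : (Option F → F) ⧸ Csub → ℕ := fun x =>
    Quotient.liftOn' x (fun u => errDist u C) (by
      intro a b hab
      have hab' : -a + b ∈ C := QuotientAddGroup.leftRel_apply.mp hab
      have hb : b = a + (-a + b) := by ring
      calc errDist a C = errDist (a + (-a + b)) C := (hinv a _ hab').symm
        _ = errDist b C := by rw [← hb])
  have hED : ∀ u : Option F → F, ED (QuotientAddGroup.mk u) = errDist u C := fun u => rfl
  have hbdd : BddAbove {d | ∃ u : Option F → F, errDist u C = d} := by
    refine ⟨Fintype.card (Option F), ?_⟩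
    rintro d ⟨u, rfl⟩
    exact le_trans (hle u 0 h0C) hammingDist_le_card_fintype
  have hED3 : ∀ x : (Option F → F) ⧸ Csub, ED x ≤ 3 := by
    intro x
    obtain ⟨u, rfl⟩ := QuotientAddGroup.mk_surjective x
    rw [hED, ← hcov]
    exact le_csSup hbdd ⟨u, rfl⟩
  have hcos : ∀ u v : Option F → F, u - v ∈ C → (u + ·) '' C = (v + ·) '' C := by
    intro u v huv
    ext w
    constructor
    · rintro ⟨c, hc, rfl⟩
      exact ⟨(u - v) + c, prs_add huv hc, by dsimp only; ring⟩
    · rintro ⟨c, hc, rfl⟩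
      refine ⟨c - (u - v), by rw [sub_eq_add_neg]; exact prs_add hc (prs_neg huv),
        by dsimp only; ring⟩
  have hcos' : ∀ u v : Option F → F, (u + ·) '' C = (v + ·) '' C → u - v ∈ C := by
    intro u v h
    have hu : u ∈ (u + ·) '' C := ⟨0, h0C, by simp⟩
    rw [h] at hu
    obtain ⟨c, hc, hw⟩ := hu
    have h2 : u - v = c := by rw [← hw]; dsimp only; ring
    rw [h2]
    exact hc
  haveI : Finite ((Option F → F) ⧸ Csub) := Quotient.finite _
  haveI : Fintype ((Option F → F) ⧸ Csub) := Fintype.ofFinite _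
  have hq0 : 0 < q := by omega
  have hcardCsub : Nat.card Csub = q ^ (q - 3) := prs_card (by omega)
  have hV : Nat.card (Option F → F) = q ^ (q + 1) := by
    rw [Nat.card_eq_fintype_card, Fintype.card_fun, Fintype.card_option]
  have h1 := AddSubgroup.card_eq_card_quotient_mul_card_addSubgroup Csub
  have hcardQ : Nat.card ((Option F → F) ⧸ Csub) = q ^ 4 := by
    have h4 : q ^ (q + 1) = q ^ 4 * q ^ (q - 3) := by
      rw [← pow_add]
      congr 1
      omega
    rw [hV, hcardCsub, h4] at h1
    exact (Nat.eq_of_mul_eq_mul_right (pow_pos hq0 _) h1.symm)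
  -- the Hamming ball of radius 2 maps bijectively to cosets of error distance ≤ 2
  let Θ : {w : Option F → F // hammingNorm w ≤ 2} →
      {x : (Option F → F) ⧸ Csub // ED x ≤ 2} := fun w =>
    ⟨QuotientAddGroup.mk w.1, by
      rw [hED]
      refine le_trans (hle w.1 0 h0C) ?_
      rw [hammingDist_zero_right]
      exact w.2⟩
  have hΘ : Function.Bijective Θ := by
    constructor
    · rintro ⟨w, hw⟩ ⟨w', hw'⟩ heq
      have h := congrArg Subtype.val heq
      simp only [Θ] at h
      have hmem : -w + w' ∈ Csub := QuotientAddGroup.eq.mp h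
      have hmem' : w' - w ∈ C := by rwa [neg_add_eq_sub] at hmem
      have hnorm : hammingNorm (w' - w) ≤ 4 := by
        rw [show w' - w = -w + w' by abel, ← hammingDist_eq_hammingNorm, hammingDist_comm]
        calc hammingDist w' w ≤ hammingDist w' 0 + hammingDist 0 w := hammingDist_triangle _ _ _
          _ = hammingNorm w' + hammingNorm w := by
              rw [hammingDist_zero_right, hammingDist_comm, hammingDist_zero_right]
          _ ≤ 4 := by omega
      have hzero := prs_minwt hq hmem' hnorm
      exact Subtype.ext (sub_eq_zero.mp hzero).symm
    · rintro ⟨x, hx⟩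
      obtain ⟨u, rfl⟩ := QuotientAddGroup.mk_surjective x
      rw [hED] at hx
      obtain ⟨c, hc, hdist⟩ := hex u
      refine ⟨⟨u - c, ?_⟩, ?_⟩
      · rw [show u - c = -c + u by abel, ← hammingDist_eq_hammingNorm, hammingDist_comm]
        omega
      · apply Subtype.ext
        simp only [Θ]
        apply QuotientAddGroup.eq.mpr
        have h2 : -(u - c) + u = c := by ring
        show -(u - c) + u ∈ C
        rw [h2]
        exact hc
  -- cosets of error distance 3 match the statement's subtype
  let Γ : {x : (Option F → F) ⧸ Csub // ED x = 3} →
      {S : Set (Option F → F) // ∃ u : Option F → F, errDist u C = 3 ∧ S = (u + ·) '' C} :=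
    fun x => ⟨((Quotient.out x.1 : Option F → F) + ·) '' C,
      ⟨Quotient.out x.1, by
        have h2 : ED (QuotientAddGroup.mk (Quotient.out x.1)) = ED x.1 := by
          rw [QuotientAddGroup.out_eq']
        rw [← hED (Quotient.out x.1), h2]
        exact x.2, rfl⟩⟩
  have hΓ : Function.Bijective Γ := by
    constructor
    · rintro x y heq
      have h := congrArg Subtype.val heq
      simp only [Γ] at h
      have h2 := hcos' _ _ h
      have h3 : QuotientAddGroup.mk (s := Csub) (Quotient.out x.1)
          = QuotientAddGroup.mk (Quotient.out y.1) := by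
        apply QuotientAddGroup.eq.mpr
        have h4 : -(Quotient.out x.1 : Option F → F) + Quotient.out y.1
            = -(Quotient.out x.1 - Quotient.out y.1) := by ring
        show -(Quotient.out x.1 : Option F → F) + Quotient.out y.1 ∈ C
        rw [h4]
        exact prs_neg h2
      apply Subtype.ext
      rw [← QuotientAddGroup.out_eq' x.1, ← QuotientAddGroup.out_eq' y.1]
      exact h3
    · rintro ⟨S, u, h3, hS⟩
      refine ⟨⟨QuotientAddGroup.mk u, by rw [hED]; exact h3⟩, ?_⟩
      apply Subtype.ext
      simp only [Γ]
      rw [hS]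
      apply hcos
      have h5 : QuotientAddGroup.mk (s := Csub)
          (Quotient.out (QuotientAddGroup.mk (s := Csub) u)) = QuotientAddGroup.mk u :=
        QuotientAddGroup.out_eq' _
      have h6 : -(Quotient.out (QuotientAddGroup.mk (s := Csub) u) : Option F → F) + u ∈ C :=
        QuotientAddGroup.eq.mp h5
      have h7 : (Quotient.out (QuotientAddGroup.mk (s := Csub) u) : Option F → F) - u
          = -(-(Quotient.out (QuotientAddGroup.mk (s := Csub) u) : Option F → F) + u) := by
        ring
      rw [h7]
      exact prs_neg h6
  have he23 : ∀ x : (Option F → F) ⧸ Csub, ED x = 3 ↔ ¬ ED x ≤ 2 := fun x => by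
    have := hED3 x
    omega
  have hcount : Nat.card {x : (Option F → F) ⧸ Csub // ED x = 3}
      = Nat.card ((Option F → F) ⧸ Csub) - Nat.card {x : (Option F → F) ⧸ Csub // ED x ≤ 2} := by
    rw [Nat.card_congr (Equiv.subtypeEquivRight he23)]
    rw [Nat.card_eq_fintype_card, Nat.card_eq_fintype_card, Nat.card_eq_fintype_card]
    rw [Fintype.card_subtype_compl]
  have hball : Nat.card {x : (Option F → F) ⧸ Csub // ED x ≤ 2}
      = 1 + (q + 1) * (q - 1) + (q + 1).choose 2 * (q - 1) ^ 2 := by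
    rw [← Nat.card_congr (Equiv.ofBijective Θ hΘ)]
    rw [ball2_card]
    rw [Fintype.card_option]
  calc Nat.card {S : Set (Option F → F) // ∃ u : Option F → F,
        errDist u C = 3 ∧ S = (u + ·) '' C}
      = Nat.card {x : (Option F → F) ⧸ Csub // ED x = 3} :=
        (Nat.card_congr (Equiv.ofBijective Γ hΓ)).symm
    _ = q ^ 4 - (1 + (q + 1) * (q - 1) + (q + 1).choose 2 * (q - 1) ^ 2) := by
        rw [hcount, hball, hcardQ]
    _ = (q - 1) * (q ^ 3 + 2 * q ^ 2 + q) / 2 := arith_aux hq
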